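/- Let G = (V, E, L) be a colored directed graph containing two intersecting cycles with the same coloring: periodic cycles π₁ ≠ π₂ with common period p > 0, L(π₁(i)) = L(π₂(i)) for all i, and π₁(i₀) = π₂(i₀) = v for some i₀. Then the number of hypotheses grows exponentially: for every k ≥ 1 there is a single color sequence w of length kp such that there are at least 2^k distinct paths of length kp starting and ending at v whose color sequence equals w. -/

import Mathlib

private lemma per_aux {V : Type*} (π : ℤ → V) (p : ℕ)
    (hper : ∀ i, π (i + (p : ℤ)) = π i) :
    ∀ n : ℤ, ∀ i : ℤ, π (i + n * p) = π i := by
  intro n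
  induction n using Int.induction_on with
  | zero => simp
  | succ m ih =>
    intro i
    have e : i + ((m : ℤ) + 1) * p = i + (m : ℤ) * p + p := by ring
    rw [e, hper, ih]
  | pred m ih =>
    intro i
    have h := hper (i + (-(m : ℤ) - 1) * p)
    have e : i + (-(m : ℤ) - 1) * p + p = i + (-(m : ℤ)) * p := by ring
    rw [e] at h
    rw [← h]
    exact ih i

/-- If a colored directed graph contains two intersecting cycles with the same coloring
(periodic cycles `π₁ ≠ π₂` with common period `p > 0`, `L (π₁ i) = L (π₂ i)` for all
`i`, and `π₁ i₀ = π₂ i₀ = v`), then the number of hypotheses grows exponentially: for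
every `k ≥ 1` there is a single color sequence `w` of length `k * p` admitting at least
`2 ^ k` distinct paths of length `k * p` from `v` back to `v` with color sequence `w`. -/
theorem intersecting_cycles_give_exponential_hypothesis_growth
    {V Φ : Type*} (E : V → V → Prop) (L : V → Φ)
    (π₁ π₂ : ℤ → V) (p : ℕ) (hp : 0 < p)
    (hedge₁ : ∀ i, E (π₁ i) (π₁ (i + 1)))
    (hper₁ : ∀ i, π₁ (i + (p : ℤ)) = π₁ i)
    (hedge₂ : ∀ i, E (π₂ i) (π₂ (i + 1)))
    (hper₂ : ∀ i, π₂ (i + (p : ℤ)) = π₂ i)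
    (hne : π₁ ≠ π₂)
    (hcol : ∀ i, L (π₁ i) = L (π₂ i))
    (v : V) (i₀ : ℤ) (hint₁ : π₁ i₀ = v) (hint₂ : π₂ i₀ = v) :
    ∀ k : ℕ, 1 ≤ k → ∃ w : ℕ → Φ, ∃ f : Fin (2 ^ k) → (ℕ → V),
      (∀ a : Fin (2 ^ k),
        f a 0 = v ∧ f a (k * p) = v ∧
        (∀ i < k * p, E (f a i) (f a (i + 1))) ∧
        (∀ i ≤ k * p, L (f a i) = w i)) ∧
      (∀ a b : Fin (2 ^ k), a ≠ b → ∃ i ≤ k * p, f a i ≠ f b i) := by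
  intro k hk
  have hpz : (0 : ℤ) < (p : ℤ) := by exact_mod_cast hp
  -- the two cycles differ at some offset r ∈ [0, p)
  obtain ⟨j, hj⟩ := Function.ne_iff.mp hne
  set r : ℤ := (j - i₀) % (p : ℤ) with hrdef
  have hr0 : 0 ≤ r := Int.emod_nonneg _ (ne_of_gt hpz)
  have hrp : r < (p : ℤ) := Int.emod_lt_of_pos _ hpz
  have hjr : π₁ (i₀ + r) ≠ π₂ (i₀ + r) := by
    have hq : i₀ + r + ((j - i₀) / (p : ℤ)) * (p : ℤ) = j := by
      have := Int.mul_ediv_add_emod (j - i₀) (p : ℤ)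
      rw [hrdef]; linarith [this]
    have h1 := per_aux π₁ p hper₁ ((j - i₀) / (p : ℤ)) (i₀ + r)
    have h2 := per_aux π₂ p hper₂ ((j - i₀) / (p : ℤ)) (i₀ + r)
    rw [hq] at h1 h2
    rw [← h1, ← h2]; exact hj
  -- the paths
  set f : Fin (2 ^ k) → ℕ → V :=
    fun a i => if (a : ℕ).testBit (i / p) then π₂ (i₀ + i) else π₁ (i₀ + i) with hf
  -- at multiples of p both cycles are at v
  have hvmul : ∀ (π : ℤ → V), (∀ i, π (i + (p : ℤ)) = π i) → π i₀ = v →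
      ∀ i : ℕ, p ∣ i → π (i₀ + i) = v := by
    intro π hper hiv i hi
    obtain ⟨t, ht⟩ := hi
    have e : (i : ℤ) = (t : ℤ) * (p : ℤ) := by rw [ht]; push_cast; ring
    rw [e, per_aux π p hper, hiv]
  have hkey : ∀ (a : Fin (2 ^ k)) (i : ℕ), p ∣ i → f a i = v := by
    intro a i hi
    rw [hf]; dsimp only
    split
    · exact hvmul π₂ hper₂ hint₂ i hi
    · exact hvmul π₁ hper₁ hint₁ i hi
  -- successor value along the same cycle as step i
  have hstep : ∀ (a : Fin (2 ^ k)) (i : ℕ),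
      f a (i + 1) = (if (a : ℕ).testBit (i / p) then π₂ (i₀ + i + 1)
        else π₁ (i₀ + i + 1)) := by
    intro a i
    by_cases hdvd : p ∣ (i + 1)
    · have h1 : f a (i + 1) = v := hkey a (i + 1) hdvd
      have e : i₀ + (i : ℤ) + 1 = i₀ + ((i + 1 : ℕ) : ℤ) := by push_cast; ring
      rw [h1]
      split
      · rw [e, hvmul π₂ hper₂ hint₂ _ hdvd]
      · rw [e, hvmul π₁ hper₁ hint₁ _ hdvd]
    · have hq : (i + 1) / p = i / p := Nat.succ_div_of_not_dvd hdvd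
      rw [hf]; dsimp only
      rw [hq]
      split <;> · congr 1; push_cast; ring
  refine ⟨fun i => L (π₁ (i₀ + i)), f, ?_, ?_⟩
  · intro a
    refine ⟨?_, ?_, ?_, ?_⟩
    · exact hkey a 0 (Dvd.intro 0 rfl)
    · exact hkey a (k * p) ⟨k, Nat.mul_comm k p⟩
    · intro i _
      rw [hstep a i, hf]; dsimp only
      split
      · exact hedge₂ (i₀ + i)
      · exact hedge₁ (i₀ + i)
    · intro i _
      rw [hf]; dsimp only
      split
      · exact (hcol (i₀ + i)).symm
      · rfl
  · intro a b hab
    -- find a bit where a and b differ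
    have hbit : ∃ t, t < k ∧ (a : ℕ).testBit t ≠ (b : ℕ).testBit t := by
      by_contra h
      push_neg at h
      apply hab
      apply Fin.ext
      apply Nat.eq_of_testBit_eq
      intro t
      by_cases ht : t < k
      · exact h t ht
      · have hkt : 2 ^ k ≤ 2 ^ t := Nat.pow_le_pow_right (by norm_num) (le_of_not_gt ht)
        rw [Nat.testBit_lt_two_pow (lt_of_lt_of_le a.isLt hkt),
          Nat.testBit_lt_two_pow (lt_of_lt_of_le b.isLt hkt)]
    obtain ⟨t, htk, hbt⟩ := hbit
    refine ⟨t * p + r.toNat, ?_, ?_⟩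
    · have hrn : r.toNat < p := by omega
      have h1 : (t + 1) * p ≤ k * p := Nat.mul_le_mul_right p htk
      have h2 : t * p + r.toNat < (t + 1) * p := by
        have : (t + 1) * p = t * p + p := by ring
        omega
      omega
    · have hrn : r.toNat < p := by omega
      have hdiv : (t * p + r.toNat) / p = t := by
        rw [Nat.add_comm, Nat.add_mul_div_right _ _ hp, Nat.div_eq_of_lt hrn]
        omega
      have hcast : (i₀ : ℤ) + ((t * p + r.toNat : ℕ) : ℤ) = (i₀ + r) + (t : ℤ) * p := by
        push_cast [Int.toNat_of_nonneg hr0]; ring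
      have hval : ∀ (π : ℤ → V), (∀ i, π (i + (p : ℤ)) = π i) →
          π (i₀ + ((t * p + r.toNat : ℕ) : ℤ)) = π (i₀ + r) := by
        intro π hper
        rw [hcast, per_aux π p hper]
      rw [hf]; dsimp only
      rw [hdiv, hval π₁ hper₁, hval π₂ hper₂]
      rcases Bool.eq_false_or_eq_true ((a : ℕ).testBit t) with ha | ha <;>
        rcases Bool.eq_false_or_eq_true ((b : ℕ).testBit t) with hb | hb <;>
        simp [ha, hb] at hbt ⊢
      · exact hjr.symm
      · exact hjr
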